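/- The cardinality of the set of 312-avoiding TITOs equals the cardinality of the set of 312-avoiding real TITOs plus n times the (n − 1)-st Catalan number, i.e., |{312-avoiding TITOs}| = |{312-avoiding real TITOs}| + n · Catalan(n − 1), where Catalan(m) = C(2m, m)/(m + 1). -/

import Mathlib

structure TITO (n : ℕ) where
  rel : ℤ → ℤ → Prop
  refl : ∀ a, rel a a
  antisymm : ∀ a b, rel a b → rel b a → a = b
  trans : ∀ a b c, rel a b → rel b c → rel a c
  total : ∀ a b, rel a b ∨ rel b a
  invariant : ∀ a b, rel a b ↔ rel (a + n) (b + n)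

namespace TITO

variable {n : ℕ}

/-- The inversion set of a TITO. -/
def Inversions (t : TITO n) : Set (ℤ × ℤ) := {p | p.1 < p.2 ∧ t.rel p.2 p.1}

/-- A TITO is 312-avoiding if there are no integers `a < b < c` with `c ≼ a` and `a ≼ b`. -/
def Avoids312 (t : TITO n) : Prop :=
  ¬ ∃ a b c : ℤ, a < b ∧ b < c ∧ t.rel c a ∧ t.rel a b

/-- A TITO is 132-avoiding if there are no integers `a < b < c` with `a ≼ c` and `c ≼ b`. -/
def Avoids132 (t : TITO n) : Prop :=
  ¬ ∃ a b c : ℤ, a < b ∧ b < c ∧ t.rel a c ∧ t.rel c b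

/-- A set is order-convex for a TITO. -/
def OrderConvex (t : TITO n) (S : Set ℤ) : Prop :=
  ∀ x ∈ S, ∀ z ∈ S, ∀ y : ℤ, t.rel x y → t.rel y z → y ∈ S

/-- A block of a TITO: an order-convex set with no minimal and no maximal element in which
all intervals are finite. -/
def IsBlock (t : TITO n) (I : Set ℤ) : Prop :=
  t.OrderConvex I ∧
  (∀ a ∈ I, ∃ b ∈ I, b ≠ a ∧ t.rel b a) ∧
  (∀ a ∈ I, ∃ b ∈ I, b ≠ a ∧ t.rel a b) ∧
  (∀ a ∈ I, ∀ c ∈ I, t.rel a c → {b : ℤ | t.rel a b ∧ t.rel b c}.Finite)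

/-- A block is waxing if `a ≼ a + n` for every `a` in it. -/
def Waxing (t : TITO n) (I : Set ℤ) : Prop := ∀ a ∈ I, t.rel a (a + n)

/-- A block is waning if `a + n ≼ a` for every `a` in it. -/
def Waning (t : TITO n) (I : Set ℤ) : Prop := ∀ a ∈ I, t.rel (a + n) a

/-- A TITO is real if `a ≼ a + n` whenever the residue class of `a` mod `n` is order-convex. -/
def IsReal (t : TITO n) : Prop :=
  ∀ a : ℤ, t.OrderConvex {x : ℤ | ∃ k : ℤ, x = a + k * n} → t.rel a (a + n)

/-- A TITO is co-real if `a + n ≼ a` whenever the residue class of `a` mod `n` is order-convex. -/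
def IsCoReal (t : TITO n) : Prop :=
  ∀ a : ℤ, t.OrderConvex {x : ℤ | ∃ k : ℤ, x = a + k * n} → t.rel (a + n) a

/-- `(a, b)` with `a < b` is a lower wall if `b ≼ a` is a cover relation of the total order. -/
def LowerWall (t : TITO n) (a b : ℤ) : Prop :=
  a < b ∧ t.rel b a ∧ ∀ z : ℤ, z ≠ a → z ≠ b → ¬ (t.rel b z ∧ t.rel z a)

end TITO


-- ===================== auxiliary development =====================


/-- Nesting functions on a chain of `L` elements. -/
def NF (L : ℕ) : Type :=
  {f : Fin L → ℕ // (∀ i : Fin L, (i : ℕ) ≤ f i ∧ f i < L) ∧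
    ∀ i j : Fin L, (i : ℕ) < (j : ℕ) → (j : ℕ) ≤ f i → f j ≤ f i}

namespace NF

instance finite (L : ℕ) : Finite (NF L) := by
  apply Finite.of_injective
    (fun f : NF L => (fun i => (⟨f.1 i, (f.2.1 i).2⟩ : Fin L) : Fin L → Fin L))
  intro f g h
  apply Subtype.ext
  funext i
  have := congrFun h i
  simpa [Fin.ext_iff] using this

instance uniqueZero : Unique (NF 0) where
  default := ⟨fun i => i.elim0, by constructor <;> (intro i; exact i.elim0)⟩
  uniq := fun f => Subtype.ext (funext fun i => i.elim0)

variable {L j : ℕ}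

/-- Proof-irrelevant accessor. -/
def val (f : NF L) (k : ℕ) : ℕ := if h : k < L then f.1 ⟨k, h⟩ else 0

lemma val_ge (f : NF L) {k : ℕ} (h : k < L) : k ≤ f.val k ∧ f.val k < L := by
  unfold val
  rw [dif_pos h]
  exact ⟨(f.2.1 ⟨k, h⟩).1, (f.2.1 ⟨k, h⟩).2⟩

lemma val_nest (f : NF L) {i k : ℕ} (hik : i < k) (hkL : k < L) (hk : k ≤ f.val i) :
    f.val k ≤ f.val i := by
  have hiL : i < L := lt_trans hik hkL
  unfold val at *
  rw [dif_pos hiL] at hk ⊢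
  rw [dif_pos hkL]
  exact f.2.2 ⟨i, hiL⟩ ⟨k, hkL⟩ hik hk

lemma ext' {f g : NF L} (h : ∀ k, k < L → f.val k = g.val k) : f = g := by
  apply Subtype.ext
  funext i
  have := h i i.2
  unfold val at this
  rw [dif_pos i.2, dif_pos i.2] at this
  simpa using this

/-- Build an `NF` from a plain function. -/
def mk' (F : ℕ → ℕ) (h1 : ∀ k, k < L → k ≤ F k ∧ F k < L)
    (h2 : ∀ i k, i < k → k < L → k ≤ F i → F k ≤ F i) : NF L :=
  ⟨fun i => F i, fun i => h1 i i.2, fun i k hik hk => h2 i k hik k.2 hk⟩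

lemma mk'_val (F : ℕ → ℕ) (h1) (h2) {k : ℕ} (hk : k < L) :
    (mk' (L := L) F h1 h2).val k = F k := by
  unfold val mk'
  rw [dif_pos hk]

/-- The fiber equivalence. -/
def fiberEquiv (L j : ℕ) (hj : j ≤ L) :
    {f : NF (L + 1) // f.val 0 = j} ≃ NF j × NF (L - j) where
  toFun f := by
    refine (mk' (fun i => f.1.val (i + 1) - 1) ?_ ?_, mk' (fun i => f.1.val (j + 1 + i) - (j + 1)) ?_ ?_)
    · intro k hk
      have h1 := f.1.val_ge (k := k + 1) (by omega)
      have h2 : f.1.val (k + 1) ≤ j := by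
        have := f.1.val_nest (i := 0) (k := k + 1) (by omega) (by omega) (by rw [f.2]; omega)
        rw [f.2] at this
        exact this
      omega
    · intro i k hik hkL hk
      have h1 := f.1.val_ge (k := i + 1) (by omega)
      have h2 : f.1.val (i + 1) ≤ j := by
        have := f.1.val_nest (i := 0) (k := i + 1) (by omega) (by omega) (by rw [f.2]; omega)
        rw [f.2] at this
        exact this
      have := f.1.val_nest (i := i + 1) (k := k + 1) (by omega) (by omega) (by omega)
      omega
    · intro k hk
      have h1 := f.1.val_ge (k := j + 1 + k) (by omega)
      omega
    · intro i k hik hkL hk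
      have h1 := f.1.val_ge (k := j + 1 + i) (by omega)
      have := f.1.val_nest (i := j + 1 + i) (k := j + 1 + k) (by omega) (by omega) (by omega)
      omega
  invFun ab := by
    refine ⟨mk' (fun k => if k = 0 then j else if k ≤ j then ab.1.val (k - 1) + 1
      else ab.2.val (k - (j + 1)) + (j + 1)) ?_ ?_, ?_⟩
    · intro k hk
      by_cases h0 : k = 0
      · simp [h0]; omega
      · by_cases hkj : k ≤ j
        · simp only [h0, hkj, if_true, if_false]
          have := ab.1.val_ge (k := k - 1) (by omega)
          omega
        · simp only [h0, hkj, if_false]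
          have := ab.2.val_ge (k := k - (j + 1)) (by omega)
          omega
    · intro i k hik hkL hk
      have hk0 : ¬ (k = 0) := by omega
      by_cases hi0 : i = 0
      · simp only [hi0, if_true] at hk
        have hkj : k ≤ j := hk
        simp only [hi0, hk0, hkj, if_true, if_false]
        have := ab.1.val_ge (k := k - 1) (by omega)
        omega
      · by_cases hij : i ≤ j
        · simp only [hi0, hij, if_true, if_false] at hk
          have h2 := ab.1.val_ge (k := i - 1) (by omega)
          have hkj : k ≤ j := by omega
          simp only [hi0, hij, hk0, hkj, if_true, if_false]
          have := ab.1.val_nest (i := i - 1) (k := k - 1) (by omega) (by omega) (by omega)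
          omega
        · simp only [hi0, hij, if_false] at hk
          have hkj : ¬ (k ≤ j) := by omega
          simp only [hi0, hij, hk0, hkj, if_false]
          have := ab.2.val_nest (i := i - (j + 1)) (k := k - (j + 1)) (by omega) (by omega)
            (by omega)
          omega
    · rw [mk'_val _ _ _ (by omega)]
      simp
  left_inv f := by
    apply Subtype.ext
    apply ext'
    intro k hkL
    rw [mk'_val _ _ _ hkL]
    by_cases h0 : k = 0
    · simp only [h0, if_true]
      rw [h0] at hkL
      exact f.2.symm
    · by_cases hkj : k ≤ j
      · simp only [h0, hkj, if_true, if_false]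
        rw [mk'_val _ _ _ (by omega)]
        have h1 := f.1.val_ge (k := (k - 1) + 1) (by omega)
        have he : k - 1 + 1 = k := by omega
        rw [he] at h1 ⊢
        omega
      · simp only [h0, hkj, if_false]
        rw [mk'_val _ _ _ (by omega)]
        have h1 := f.1.val_ge (k := j + 1 + (k - (j + 1))) (by omega)
        have he : j + 1 + (k - (j + 1)) = k := by omega
        rw [he] at h1 ⊢
        omega
  right_inv ab := by
    ext : 1
    · apply ext'
      intro k hk
      rw [mk'_val _ _ _ hk, mk'_val _ _ _ (by omega)]
      have h0 : ¬ (k + 1 = 0) := by omega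
      have hkj : k + 1 ≤ j := by omega
      simp only [h0, hkj, if_true, if_false]
      have he : k + 1 - 1 = k := by omega
      rw [he]
      omega
    · apply ext'
      intro k hk
      rw [mk'_val _ _ _ hk, mk'_val _ _ _ (by omega)]
      have h0 : ¬ (j + 1 + k = 0) := by omega
      have hkj : ¬ (j + 1 + k ≤ j) := by omega
      simp only [h0, hkj, if_false]
      have he : j + 1 + k - (j + 1) = k := by omega
      rw [he]
      omega
end NF

theorem NF.card (L : ℕ) : Nat.card (NF L) = catalan L := by
  induction L using Nat.strong_induction_on with
  | _ L ih =>
    match L with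
    | 0 =>
      rw [catalan_zero]
      exact Nat.card_unique
    | (M + 1) =>
      classical
      have hfib : ∀ jj : Fin (M + 1),
          Nat.card {f : NF (M + 1) // f.val 0 = (jj : ℕ)} = catalan jj * catalan (M - jj) := by
        intro jj
        have hj : (jj : ℕ) ≤ M := by omega
        rw [Nat.card_eq_of_bijective _ (NF.fiberEquiv M jj hj).bijective]
        rw [Nat.card_prod, ih _ (by omega), ih _ (by omega)]
      have hπ : ∀ f : NF (M + 1), f.val 0 < M + 1 := fun f => (f.val_ge (by omega)).2
      have e1 : (Σ jj : Fin (M + 1), {f : NF (M + 1) // (⟨f.val 0, hπ f⟩ : Fin (M + 1)) = jj}) ≃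
          NF (M + 1) := Equiv.sigmaFiberEquiv _
      have e2 : ∀ jj : Fin (M + 1),
          {f : NF (M + 1) // (⟨f.val 0, hπ f⟩ : Fin (M + 1)) = jj} ≃
          {f : NF (M + 1) // f.val 0 = (jj : ℕ)} :=
        fun jj => Equiv.subtypeEquivRight (fun f => by
          constructor
          · intro h; rw [← h]
          · intro h; exact Fin.ext h)
      rw [← Nat.card_eq_of_bijective _ e1.bijective]
      have : ∀ jj : Fin (M + 1),
          Nat.card {f : NF (M + 1) // (⟨f.val 0, hπ f⟩ : Fin (M + 1)) = jj} =
          catalan jj * catalan (M - jj) := by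
        intro jj
        rw [Nat.card_eq_of_bijective _ (e2 jj).bijective, hfib jj]
      have hfin : ∀ jj : Fin (M + 1),
          Fintype {f : NF (M + 1) // (⟨f.val 0, hπ f⟩ : Fin (M + 1)) = jj} :=
        fun jj => Fintype.ofFinite _
      rw [Nat.card_eq_fintype_card (α := (Σ jj : Fin (M+1), _)), Fintype.card_sigma]
      · rw [catalan_succ]
        apply Finset.sum_congr rfl
        intro jj _
        rw [← this jj, Nat.card_eq_fintype_card]

namespace TITO

variable {n : ℕ}

-- ===== auxiliary =====

lemma ext' (t t' : TITO n) (h : t.rel = t'.rel) : t = t' := by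
  cases t; cases t'; simp_all


lemma relc (t : TITO n) {a a' b b' : ℤ} (ha : a = a') (hb : b = b') :
    t.rel a b ↔ t.rel a' b' := by subst ha; subst hb; rfl

lemma rel_of_not_rel (t : TITO n) {a b : ℤ} (h : ¬ t.rel a b) : t.rel b a :=
  (t.total a b).resolve_left h

lemma not_rel_of_rel (t : TITO n) {a b : ℤ} (hne : a ≠ b) (h : t.rel a b) : ¬ t.rel b a :=
  fun h' => hne (t.antisymm a b h h')

lemma shift_nat (t : TITO n) (a b : ℤ) (k : ℕ) : t.rel a b ↔ t.rel (a + k * n) (b + k * n) := by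
  induction k with
  | zero => simp
  | succ m ih =>
    rw [ih, t.invariant]
    exact t.relc (by push_cast; ring) (by push_cast; ring)

lemma shift_int (t : TITO n) (a b : ℤ) (k : ℤ) : t.rel a b ↔ t.rel (a + k * n) (b + k * n) := by
  rcases le_or_gt 0 k with hk | hk
  · lift k to ℕ using hk
    exact_mod_cast t.shift_nat a b k
  · have := t.shift_nat (a + k * n) (b + k * n) (-k).toNat
    rw [this]
    have hkk : ((-k).toNat : ℤ) = -k := Int.toNat_of_nonneg (by omega)
    exact (t.relc (by rw [hkk]; ring) (by rw [hkk]; ring)).symm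

variable (t : TITO n)

/-- `a` is in the "infinite descending" set. -/
def SD (t : TITO n) (a : ℤ) : Prop := t.rel (a + n) a

lemma sd_shift {a : ℤ} (k : ℤ) : t.SD a ↔ t.SD (a + k * n) := by
  unfold SD
  rw [t.shift_int (a + n) a k]
  exact t.relc (by ring) rfl

lemma dominate (h312 : t.Avoids312) {a b : ℤ} (ha : t.SD a) (hb : a < b) (hn : 1 ≤ n) :
    t.rel b a := by
  have hk : ∀ k : ℕ, t.rel (a + (k + 1) * n) a := by
    intro k
    induction k with
    | zero => simpa [SD] using ha
    | succ m ih =>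
      have h2 : t.rel (a + (m + 2) * n) (a + n) := by
        have := (t.shift_nat (a + (m + 1) * n) a 1).mp ih
        exact (t.relc (by push_cast; ring) (by push_cast; ring)).mp this
      exact t.trans _ _ _ h2 ha
  set k : ℕ := (b - a).toNat with hkdef
  have hc : t.rel (a + (k + 1) * n) a := hk k
  have hbc : b ≤ a + (k + 1) * n := by
    have h1 : (k : ℤ) = b - a := Int.toNat_of_nonneg (by omega)
    have hn' : (1 : ℤ) ≤ n := by exact_mod_cast hn
    nlinarith [h1, hn']
  rcases eq_or_lt_of_le hbc with he | hlt
  · rwa [← he] at hc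
  · rcases t.total a b with h | h
    · exact absurd ⟨a, b, _, hb, hlt, hc, h⟩ h312
    · exact h

lemma not_rel_far (h312 : t.Avoids312) (hn : 1 ≤ n) {a b : ℤ} (ha : ¬ t.SD a)
    (hb : a + n ≤ b) : ¬ t.rel b a := by
  intro h
  rcases eq_or_lt_of_le hb with he | hlt
  · exact ha (show t.rel (a + n) a by rw [he]; exact h)
  · have hab : t.rel a (a + n) := t.rel_of_not_rel ha
    have hn0 : (1:ℤ) ≤ n := by exact_mod_cast hn
    exact h312 ⟨a, a + n, b, by omega, hlt, h, hab⟩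

lemma below_sd (h312 : t.Avoids312) {a s : ℤ} (ha : ¬ t.SD a) (hs : t.SD s) (hn : 1 ≤ n) :
    t.rel a s := by
  have hne : a ≠ s := fun h => ha (h ▸ hs)
  rcases lt_trichotomy a s with h | h | h
  · by_contra hrel
    have hsa : t.rel s a := t.rel_of_not_rel hrel
    rcases le_or_gt (a + n) s with h2 | h2
    · exact t.not_rel_far h312 hn ha h2 hsa
    · have h3 : t.rel (a + n) s := t.dominate h312 hs h2 hn
      exact ha (t.trans _ _ _ h3 hsa)
  · exact absurd h hne
  · exact t.dominate h312 hs h hn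

-- ===== gmax =====

attribute [local instance] Classical.propDecidable

/-- The window filter set. -/
noncomputable def wset (t : TITO n) (a : ℤ) : Finset ℤ :=
  (Finset.Icc a (a + n - 1)).filter (fun b => t.rel b a)

lemma wset_nonempty (hn : 1 ≤ n) (a : ℤ) : (t.wset a).Nonempty := by
  refine ⟨a, ?_⟩
  simp only [wset, Finset.mem_filter, Finset.mem_Icc]
  have : (1:ℤ) ≤ n := by exact_mod_cast hn
  exact ⟨⟨le_refl a, by omega⟩, t.refl a⟩

/-- The largest `b` in the window `[a, a+n-1]` with `b ≼ a`. -/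
noncomputable def gmax (t : TITO n) (hn : 1 ≤ n) (a : ℤ) : ℤ :=
  (t.wset a).max' (t.wset_nonempty hn a)

variable (hn : 1 ≤ n)

lemma gmax_ge (a : ℤ) : a ≤ t.gmax hn a := by
  apply Finset.le_max'
  simp only [wset, Finset.mem_filter, Finset.mem_Icc]
  have : (1:ℤ) ≤ n := by exact_mod_cast hn
  exact ⟨⟨le_refl a, by omega⟩, t.refl a⟩

lemma gmax_mem (a : ℤ) : t.gmax hn a ∈ t.wset a := Finset.max'_mem _ _

lemma gmax_le (a : ℤ) : t.gmax hn a ≤ a + n - 1 := by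
  have h := t.gmax_mem hn a
  simp only [wset, Finset.mem_filter, Finset.mem_Icc] at h
  exact h.1.2

lemma gmax_rel (a : ℤ) : t.rel (t.gmax hn a) a := by
  have h := t.gmax_mem hn a
  simp only [wset, Finset.mem_filter, Finset.mem_Icc] at h
  exact h.2

/-- characterization of the descending set above `a`. -/
lemma rel_iff_le_gmax (h312 : t.Avoids312) {a : ℤ} (ha : ¬ t.SD a) {b : ℤ} (hb : a < b) :
    t.rel b a ↔ b ≤ t.gmax hn a := by
  constructor
  · intro h
    rcases le_or_gt b (a + n - 1) with h2 | h2
    · apply Finset.le_max'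
      simp only [wset, Finset.mem_filter, Finset.mem_Icc]
      exact ⟨⟨le_of_lt hb, h2⟩, h⟩
    · exact absurd h (t.not_rel_far h312 hn ha (by omega))
  · intro h
    rcases eq_or_lt_of_le h with he | hlt
    · rw [he]; exact t.gmax_rel hn a
    · rcases t.total a b with h2 | h2
      · exact absurd ⟨a, b, t.gmax hn a, hb, hlt, t.gmax_rel hn a, h2⟩ h312
      · exact h2

lemma gmax_shift (h312 : t.Avoids312) {a : ℤ} (ha : ¬ t.SD a) :
    t.gmax hn (a + n) = t.gmax hn a + n := by
  have ha' : ¬ t.SD (a + n) := by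
    intro h
    exact ha ((t.sd_shift 1).mpr (by rw [one_mul] at *; exact h))
  apply le_antisymm
  · rcases eq_or_lt_of_le (t.gmax_ge hn (a + n)) with he | hlt
    · rw [← he]
      have := t.gmax_ge hn a
      omega
    · have h1 : t.rel (t.gmax hn (a + n)) (a + n) := t.gmax_rel hn (a + n)
      have h2 : t.rel (t.gmax hn (a + n) - n) a := by
        have h3 := (t.shift_int (t.gmax hn (a + n)) (a + n) (-1)).mp h1
        exact (t.relc (by ring) (by ring)).mp h3
      have := (t.rel_iff_le_gmax hn h312 ha (b := t.gmax hn (a+n) - n) (by omega)).mp h2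
      omega
  · rcases eq_or_lt_of_le (t.gmax_ge hn a) with he | hlt
    · rw [← he]
      have := t.gmax_ge hn (a + n)
      omega
    · have h1 : t.rel (t.gmax hn a) a := t.gmax_rel hn a
      have h2 : t.rel (t.gmax hn a + n) (a + n) := by
        rw [t.shift_int (t.gmax hn a) a 1] at h1
        exact (t.relc (by ring) (by ring)).mp h1
      exact (t.rel_iff_le_gmax hn h312 ha' (by omega)).mp h2

/-- Nesting: if `a < b ≤ gmax a` then `b` is not descending and `gmax b ≤ gmax a`. -/
lemma gmax_nest (h312 : t.Avoids312) {a b : ℤ} (ha : ¬ t.SD a) (hab : a < b)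
    (hb : b ≤ t.gmax hn a) : ¬ t.SD b ∧ t.gmax hn b ≤ t.gmax hn a := by
  have hrba : t.rel b a := (t.rel_iff_le_gmax hn h312 ha hab).mpr hb
  have hbnot : ¬ t.SD b := by
    intro hsb
    have : t.rel a b := t.below_sd h312 ha hsb hn
    exact (t.not_rel_of_rel (by omega) hrba) this
  refine ⟨hbnot, ?_⟩
  have h1 : t.rel (t.gmax hn b) b := t.gmax_rel hn b
  have h2 : t.rel (t.gmax hn b) a := t.trans _ _ _ h1 hrba
  rcases eq_or_lt_of_le (t.gmax_ge hn b) with he | hlt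
  · omega
  · have := (t.rel_iff_le_gmax hn h312 ha (by omega)).mp h2
    exact this

-- ===== real iff =====

lemma rel_iff_not {a b : ℤ} (hne : a ≠ b) : t.rel a b ↔ ¬ t.rel b a := by
  constructor
  · exact t.not_rel_of_rel hne
  · exact t.rel_of_not_rel

lemma real_iff (h312 : t.Avoids312) (hn : 1 ≤ n) :
    t.IsReal ↔ ¬ ∃ r : ℤ, ∀ x : ℤ, (t.SD x ↔ ∃ k : ℤ, x = r + k * n) := by
  constructor
  · rintro hreal ⟨r, hr⟩
    have hrS : t.SD r := (hr r).mpr ⟨0, by ring⟩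
    have hconv : t.OrderConvex {x : ℤ | ∃ k : ℤ, x = r + k * n} := by
      intro x hx z hz y hxy hyz
      by_contra hy
      have hyS : ¬ t.SD y := fun h => hy ((hr y).mp h)
      have hxS : t.SD x := (hr x).mpr hx
      have : t.rel y x := t.below_sd h312 hyS hxS hn
      have hxy' : x = y := t.antisymm x y hxy this
      exact hy (hxy' ▸ hx)
    have h1 : t.rel r (r + n) := hreal r hconv
    have h2 : r = r + n := t.antisymm _ _ h1 hrS
    have : (1:ℤ) ≤ n := by exact_mod_cast hn
    omega
  · intro hne a hconv
    by_contra hna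
    have haS : t.SD a := t.rel_of_not_rel hna
    apply hne
    refine ⟨a, fun x => ⟨?_, ?_⟩⟩
    · intro hx
      by_contra hxc
      push_neg at hxc
      have hn' : (1:ℤ) ≤ n := by exact_mod_cast hn
      set K : ℤ := (x - a).toNat + 1 with hK
      set M : ℤ := (a - x).toNat + 1 with hM
      have hp : a + K * n > x := by
        have := Int.self_le_toNat (x - a)
        nlinarith
      have hq : a + (-M) * n < x := by
        have := Int.self_le_toNat (a - x)
        nlinarith
      have hpS : t.SD (a + K * n) := (t.sd_shift K).mp haS
      have hqS : t.SD (a + (-M) * n) := (t.sd_shift (-M)).mp haS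
      have h1 : t.rel (a + K * n) x := t.dominate h312 hx hp hn
      have h2 : t.rel x (a + (-M) * n) := t.dominate h312 hqS hq hn
      obtain ⟨kk, hkk⟩ := hconv (a + K * n) ⟨K, rfl⟩ (a + (-M) * n) ⟨-M, rfl⟩ x h1 h2
      exact hxc kk hkk
    · rintro ⟨k, rfl⟩
      exact (t.sd_shift k).mp haS

-- ===== finiteness =====

noncomputable def encode (t : TITO n) : Fin n → Fin n → Bool :=
  fun a d => @decide (t.rel ((a : ℤ) + (d : ℤ) + 1) (a : ℤ)) (Classical.propDecidable _)

lemma encode_inj (hn : 1 ≤ n) (t t' : TITO n) (h312 : t.Avoids312) (h312' : t'.Avoids312)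
    (h : t.encode = t'.encode) : t = t' := by
  have hbit : ∀ a d : Fin n, t.rel ((a : ℤ) + (d : ℤ) + 1) a ↔ t'.rel ((a : ℤ) + (d : ℤ) + 1) a := by
    intro a d
    have := congrFun (congrFun h a) d
    simpa [encode, decide_eq_decide] using this
  have key : ∀ a b : ℤ, a < b → (t.rel b a ↔ t'.rel b a) := by
    intro a b hab
    have hn' : (1:ℤ) ≤ n := by exact_mod_cast hn
    set k : ℤ := a / n with hk
    have ha' : 0 ≤ a - k * n ∧ a - k * n < n := by
      have h0 : (n:ℤ) * (a / (n:ℤ)) + a % (n:ℤ) = a := Int.mul_ediv_add_emod a (n:ℤ)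
      have hkn : k * (n:ℤ) = (n:ℤ) * (a / (n:ℤ)) := by rw [hk]; ring
      have h1 := Int.emod_nonneg a (by omega : (n:ℤ) ≠ 0)
      have h2 := Int.emod_lt_of_pos a (by omega : (0:ℤ) < (n:ℤ))
      constructor <;> omega
    set a' : ℤ := a - k * n with ha'def
    set b' : ℤ := b - k * n with hb'def
    have hshift : ∀ (s : TITO n), s.rel b a ↔ s.rel b' a' := by
      intro s
      rw [s.shift_int b a (-k)]
      exact s.relc (by ring) (by ring)
    rw [hshift t, hshift t']
    have hab' : a' < b' := by omega
    rcases le_or_gt b' (a' + n) with hcase | hcase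
    · -- window
      have hd : 0 ≤ b' - a' - 1 ∧ b' - a' - 1 < n := by omega
      have := hbit ⟨a'.toNat, by omega⟩ ⟨(b' - a' - 1).toNat, by omega⟩
      simp only [Fin.val_mk] at this
      have he1 : ((a'.toNat : ℤ) + ((b' - a' - 1).toNat : ℤ) + 1) = b' := by omega
      have he2 : (a'.toNat : ℤ) = a' := by omega
      rw [he1, he2] at this
      exact this
    · -- far
      have hsd : t.SD a' ↔ t'.SD a' := by
        have := hbit ⟨a'.toNat, by omega⟩ ⟨n - 1, by omega⟩
        simp only [Fin.val_mk] at this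
        have he1 : ((a'.toNat : ℤ) + ((n - 1 : ℕ) : ℤ) + 1) = a' + n := by
          push_cast; omega
        have he2 : (a'.toNat : ℤ) = a' := by omega
        rw [he1, he2] at this
        exact this
      constructor
      · intro hrel
        have h1 : t.SD a' := by
          by_contra hna
          exact t.not_rel_far h312 hn hna (by omega) hrel
        exact t'.dominate h312' (hsd.mp h1) hab' hn
      · intro hrel
        have h1 : t'.SD a' := by
          by_contra hna
          exact t'.not_rel_far h312' hn hna (by omega) hrel
        exact t.dominate h312 (hsd.mpr h1) hab' hn
  apply ext'
  funext x y
  apply propext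
  rcases lt_trichotomy x y with hxy | hxy | hxy
  · rw [t.rel_iff_not (by omega : x ≠ y), t'.rel_iff_not (by omega : x ≠ y)]
    rw [key x y hxy]
  · subst hxy; simp [t.refl, t'.refl]
  · exact key y x hxy

lemma finite_avoids (hn : 1 ≤ n) : Finite {t : TITO n // t.Avoids312} := by
  apply Finite.of_injective (fun t => t.1.encode)
  intro t t' h
  exact Subtype.ext (encode_inj hn t.1 t'.1 t.2 t'.2 h)

end TITO

namespace TITOConstr

variable (n : ℕ) (r : ℤ) (f : NF (n - 1))

def InfC (x : ℤ) : Prop := ((n : ℤ)) ∣ (x - r)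

def ex (x : ℤ) : ℤ := (x - r - 1) % (n : ℤ)

noncomputable def fz (e : ℤ) : ℤ := (f.val e.toNat : ℤ)

noncomputable def G (x : ℤ) : ℤ := x - ex n r x + fz n f (ex n r x)

def mkRel (x y : ℤ) : Prop :=
  x = y ∨ (InfC n r x ∧ InfC n r y ∧ y ≤ x) ∨ (¬ InfC n r x ∧ InfC n r y) ∨
    (¬ InfC n r x ∧ ¬ InfC n r y ∧
      ((x < y ∧ G n r f x < y) ∨ (y < x ∧ x ≤ G n r f y)))

variable {n r f}

lemma Ncast (hn : 1 ≤ n) : (1 : ℤ) ≤ (n : ℤ) := by exact_mod_cast hn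

lemma ex_range (hn : 1 ≤ n) (x : ℤ) : 0 ≤ ex n r x ∧ ex n r x < (n : ℤ) := by
  have h := Ncast hn
  exact ⟨Int.emod_nonneg _ (by omega), Int.emod_lt_of_pos _ (by omega)⟩

lemma ex_decomp (x : ℤ) : ∃ q : ℤ, x = r + 1 + ex n r x + q * (n : ℤ) := by
  refine ⟨(x - r - 1) / (n : ℤ), ?_⟩
  have h1 := Int.mul_ediv_add_emod (x - r - 1) (n : ℤ)
  have h2 : (n:ℤ) * ((x - r - 1) / (n:ℤ)) = ((x - r - 1) / (n:ℤ)) * (n:ℤ) := mul_comm _ _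
  unfold ex
  omega

lemma infC_iff (hn : 1 ≤ n) (x : ℤ) : InfC n r x ↔ ex n r x = (n : ℤ) - 1 := by
  have hN : (1:ℤ) ≤ (n:ℤ) := by exact_mod_cast hn
  constructor
  · rintro ⟨k, hk⟩
    have h : x - r - 1 = ((n:ℤ) - 1) + (k - 1) * (n:ℤ) := by
      have e1 : (k - 1) * (n:ℤ) = (n:ℤ) * k - (n:ℤ) := by ring
      omega
    rw [ex, h, Int.add_mul_emod_self_right, Int.emod_eq_of_lt (by omega) (by omega)]
  · intro h
    obtain ⟨q, hq⟩ := ex_decomp (n := n) (r := r) x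
    have hgoal : x - r = (n:ℤ) * (q + 1) := by
      have e1 : (n:ℤ) * (q + 1) = q * (n:ℤ) + (n:ℤ) := by ring
      omega
    exact ⟨q + 1, hgoal⟩

lemma ex_notInf (hn : 1 ≤ n) {x : ℤ} (hx : ¬ InfC n r x) : ex n r x ≤ (n : ℤ) - 2 := by
  have h := (infC_iff hn x).not.mp hx
  have hr := ex_range hn (r := r) x
  omega

lemma cast_sub_one (hn : 1 ≤ n) : ((n - 1 : ℕ) : ℤ) = (n : ℤ) - 1 := by
  have := hn; omega

lemma fz_ge (hn : 1 ≤ n) {e : ℤ} (he : 0 ≤ e) (he2 : e ≤ (n : ℤ) - 2) :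
    e ≤ fz n f e ∧ fz n f e ≤ (n : ℤ) - 2 := by
  have h1 : e.toNat < n - 1 := by omega
  have h2 := f.val_ge h1
  unfold fz
  omega

lemma fz_nest (hn : 1 ≤ n) {e e' : ℤ} (he : 0 ≤ e) (hee : e < e') (he' : e' ≤ fz n f e)
    (he2 : e ≤ (n : ℤ) - 2) : fz n f e' ≤ fz n f e := by
  have hb := fz_ge hn (f := f) he he2
  have h1 : e.toNat < e'.toNat := by omega
  have h2 : e'.toNat < n - 1 := by omega
  have h3 : e'.toNat ≤ f.val e.toNat := by unfold fz at he'; omega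
  have := f.val_nest h1 h2 h3
  unfold fz
  omega

lemma G_ge (hn : 1 ≤ n) {x : ℤ} (hx : ¬ InfC n r x) : x ≤ G n r f x := by
  have h1 := ex_range hn (r := r) x
  have h2 := ex_notInf hn hx
  have h3 := fz_ge hn (f := f) h1.1 h2
  unfold G
  omega

lemma G_lt (hn : 1 ≤ n) {x : ℤ} (hx : ¬ InfC n r x) : G n r f x ≤ x - ex n r x + (n : ℤ) - 2 := by
  have h1 := ex_range hn (r := r) x
  have h2 := ex_notInf hn hx
  have h3 := fz_ge hn (f := f) h1.1 h2
  unfold G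
  omega

/-- Everything in `(x, G x]` is in the same window. -/
lemma same_window (hn : 1 ≤ n) {x y : ℤ} (hx : ¬ InfC n r x) (hxy : x < y) (hyG : y ≤ G n r f x) :
    ¬ InfC n r y ∧ G n r f y ≤ G n r f x := by
  have h1 := ex_range hn (r := r) x
  have h2 := ex_notInf hn hx
  have h3 := fz_ge hn (f := f) h1.1 h2
  have hGx : G n r f x = x - ex n r x + fz n f (ex n r x) := rfl
  -- y's residue
  have hey : ex n r y = ex n r x + (y - x) := by
    obtain ⟨q, hq⟩ := ex_decomp (n := n) (r := r) x
    have hy2 : y - r - 1 = (ex n r x + (y - x)) + q * (n : ℤ) := by omega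
    have : (y - r - 1) % (n : ℤ) = (ex n r x + (y - x)) % (n : ℤ) := by
      conv_lhs => rw [hy2]
      exact Int.add_mul_emod_self_right _ _ _
    rw [ex, this, Int.emod_eq_of_lt (by omega) (by omega)]
  have heyb : ex n r y ≤ fz n f (ex n r x) := by omega
  have hyInf : ¬ InfC n r y := by
    rw [infC_iff hn]
    omega
  refine ⟨hyInf, ?_⟩
  have hGy : G n r f y = y - ex n r y + fz n f (ex n r y) := rfl
  have hnest := fz_nest hn (f := f) h1.1 (show ex n r x < ex n r y by omega) heyb h2
  omega

lemma infC_shift (x : ℤ) : InfC n r (x + n) ↔ InfC n r x := by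
  unfold InfC
  constructor
  · rintro ⟨k, hk⟩; exact ⟨k - 1, by rw [mul_sub]; omega⟩
  · rintro ⟨k, hk⟩; exact ⟨k + 1, by rw [mul_add]; omega⟩

lemma ex_shift (x : ℤ) : ex n r (x + n) = ex n r x := by
  unfold ex
  have : x + (n:ℤ) - r - 1 = (x - r - 1) + 1 * (n : ℤ) := by ring
  rw [this, Int.add_mul_emod_self_right]

lemma G_shift (x : ℤ) : G n r f (x + n) = G n r f x + n := by
  unfold G
  rw [ex_shift]
  omega

end TITOConstr

namespace TITOConstr2
open TITOConstr

-- convenient local notation through section vars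
variable {n : ℕ} {r : ℤ} {f : NF (n - 1)}

lemma rel_total (hn : 1 ≤ n) (x y : ℤ) : mkRel n r f x y ∨ mkRel n r f y x := by
  unfold mkRel
  by_cases hx : InfC n r x <;> by_cases hy : InfC n r y
  · rcases le_total y x with h | h
    · left; right; left; exact ⟨hx, hy, h⟩
    · right; right; left; exact ⟨hy, hx, h⟩
  · right; right; right; left; exact ⟨hy, hx⟩
  · left; right; right; left; exact ⟨hx, hy⟩
  · rcases lt_trichotomy x y with h | h | h
    · rcases le_or_gt y (G n r f x) with h2 | h2
      · right; right; right; right; exact ⟨hy, hx, Or.inr ⟨h, h2⟩⟩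
      · left; right; right; right; exact ⟨hx, hy, Or.inl ⟨h, h2⟩⟩
    · left; left; exact h
    · rcases le_or_gt x (G n r f y) with h2 | h2
      · left; right; right; right; exact ⟨hx, hy, Or.inr ⟨h, h2⟩⟩
      · right; right; right; right; exact ⟨hy, hx, Or.inl ⟨h, h2⟩⟩

lemma rel_antisymm (hn : 1 ≤ n) (x y : ℤ) (h1 : mkRel n r f x y) (h2 : mkRel n r f y x) :
    x = y := by
  unfold mkRel at h1 h2
  rcases h1 with h1 | h1 | h1 | h1 <;> rcases h2 with h2 | h2 | h2 | h2 <;>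
    first | omega | tauto | (exfalso; omega)

lemma rel_trans (hn : 1 ≤ n) (x y z : ℤ) (h1 : mkRel n r f x y) (h2 : mkRel n r f y z) :
    mkRel n r f x z := by
  rcases h1 with h1 | h1 | h1 | h1
  · subst h1; exact h2
  · -- x,y InfC
    rcases h2 with h2 | h2 | h2 | h2
    · subst h2; unfold mkRel; tauto
    · unfold mkRel; right; left; exact ⟨h1.1, h2.2.1, by omega⟩
    · exact absurd h1.2.1 h2.1
    · exact absurd h1.2.1 h2.1
  · -- ¬x, y InfC
    rcases h2 with h2 | h2 | h2 | h2
    · subst h2; unfold mkRel; tauto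
    · unfold mkRel; right; right; left; exact ⟨h1.1, h2.2.1⟩
    · exact absurd h1.2 h2.1.elim
    · exact absurd h1.2 h2.1
  · -- ¬x, ¬y
    rcases h2 with h2 | h2 | h2 | h2
    · subst h2; unfold mkRel; tauto
    · exact absurd h2.1 h1.2.1
    · unfold mkRel; right; right; left; exact ⟨h1.1, h2.2⟩
    · -- all three not InfC
      obtain ⟨hx, hy, hcase1⟩ := h1
      obtain ⟨_, hz, hcase2⟩ := h2
      unfold mkRel
      by_cases hxz : x = z
      · left; exact hxz
      right; right; right
      refine ⟨hx, hz, ?_⟩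
      rcases hcase1 with ⟨hxy, hG1⟩ | ⟨hyx, hG1⟩
      · rcases hcase2 with ⟨hyz, hG2⟩ | ⟨hzy, hG2⟩
        · -- x<y, y<z
          left
          have := G_ge hn (f := f) hy
          omega
        · -- x<y, z<y : show x<z → Gx<z ; z<x impossible? z<x possible
          rcases lt_trichotomy x z with h | h | h
          · left
            refine ⟨h, ?_⟩
            by_contra hc
            push_neg at hc
            have hw := same_window hn (f := f) hx h (by omega)
            have := G_ge hn (f := f) hz
            omega
          · exact absurd h hxz
          · right
            exact ⟨h, by omega⟩
      · rcases hcase2 with ⟨hyz, hG2⟩ | ⟨hzy, hG2⟩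
        · -- y<x, y<z
          rcases lt_trichotomy x z with h | h | h
          · left
            refine ⟨h, ?_⟩
            have hw := same_window hn (f := f) hy hyx hG1
            omega
          · exact absurd h hxz
          · right
            refine ⟨h, ?_⟩
            have hw := same_window hn (f := f) hy hyx hG1
            omega
        · -- y<x, z<y : z<y<x
          right
          refine ⟨by omega, ?_⟩
          have hw := same_window hn (f := f) hz hzy hG2
          omega

lemma rel_invariant (hn : 1 ≤ n) (x y : ℤ) :
    mkRel n r f x y ↔ mkRel n r f (x + n) (y + n) := by
  unfold mkRel
  rw [infC_shift, infC_shift, G_shift, G_shift]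
  constructor <;> (intro h; rcases h with h | h | h | h)
  · left; omega
  · right; left; exact ⟨h.1, h.2.1, by omega⟩
  · right; right; left; tauto
  · right; right; right
    refine ⟨h.1, h.2.1, ?_⟩
    rcases h.2.2 with ⟨h3, h4⟩ | ⟨h3, h4⟩
    · left; omega
    · right; omega
  · left; omega
  · right; left; exact ⟨h.1, h.2.1, by omega⟩
  · right; right; left; tauto
  · right; right; right
    refine ⟨h.1, h.2.1, ?_⟩
    rcases h.2.2 with ⟨h3, h4⟩ | ⟨h3, h4⟩
    · left; omega
    · right; omega

end TITOConstr2

namespace TITOConstr2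
open TITOConstr

variable {n : ℕ} {r : ℤ} {f : NF (n - 1)}

noncomputable def mkTITO (n : ℕ) (hn : 1 ≤ n) (r : ℤ) (f : NF (n - 1)) : TITO n where
  rel := mkRel n r f
  refl := fun a => Or.inl rfl
  antisymm := rel_antisymm hn
  trans := rel_trans hn
  total := rel_total hn
  invariant := rel_invariant hn

lemma mk_initial (hn : 1 ≤ n) {a b c : ℤ} (hab : a < b) (hbc : b < c)
    (h : mkRel n r f c a) : mkRel n r f b a := by
  unfold mkRel at h ⊢
  by_cases hA : InfC n r a
  · by_cases hB : InfC n r b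
    · right; left; exact ⟨hB, hA, by omega⟩
    · right; right; left; exact ⟨hB, hA⟩
  · -- a not InfC: then rel c a forces c in window
    rcases h with h | h | h | h
    · omega
    · exact absurd h.2.1 hA
    · exact absurd h.2 hA
    · rcases h.2.2 with ⟨h1, h2⟩ | ⟨h1, h2⟩
      · omega
      · -- c > a, c ≤ G a
        have hw := same_window hn (f := f) hA (show a < b by omega) (by omega)
        right; right; right
        exact ⟨hw.1, hA, Or.inr ⟨hab, by omega⟩⟩

lemma mk_initial' (hn : 1 ≤ n) {a b c : ℤ} (hab : a < b) (hbc : b < c)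
    (h : mkRel n r f c a) : ¬ InfC n r a → b ≤ G n r f a := by
  intro hA
  rcases h with h | h | h | h
  · omega
  · exact absurd h.2.1 hA
  · exact absurd h.2 hA
  · rcases h.2.2 with ⟨h1, h2⟩ | ⟨h1, h2⟩
    · omega
    · omega

lemma mk_avoids (hn : 1 ≤ n) : (mkTITO n hn r f).Avoids312 := by
  rintro ⟨a, b, c, hab, hbc, hca, hab2⟩
  have h1 : mkRel n r f b a := mk_initial hn hab hbc hca
  have h2 : a = b := rel_antisymm hn a b hab2 h1
  omega

lemma mk_sd (hn : 1 ≤ n) (x : ℤ) : (mkTITO n hn r f).SD x ↔ InfC n r x := by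
  have hN : (1:ℤ) ≤ (n:ℤ) := by exact_mod_cast hn
  constructor
  · intro h
    rcases h with h | h | h | h
    · omega
    · exact h.2.1
    · exact h.2
    · exfalso
      rcases h.2.2 with ⟨h1, h2⟩ | ⟨h1, h2⟩
      · omega
      · have h3 := G_lt hn (f := f) h.2.1
        have h4 := ex_range hn (n := n) (r := r) x
        omega
  · intro h
    right; left
    exact ⟨(infC_shift (n := n) (r := r) x).mpr h, h, by omega⟩

lemma mk_notreal (hn : 1 ≤ n) : ¬ (mkTITO n hn r f).IsReal := by
  rw [TITO.real_iff _ (mk_avoids hn) hn, not_not]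
  refine ⟨r, fun x => ?_⟩
  rw [mk_sd hn x]
  constructor
  · rintro ⟨k, hk⟩
    exact ⟨k, by rw [mul_comm] at hk; omega⟩
  · rintro ⟨k, hk⟩
    exact ⟨k, by rw [mul_comm]; omega⟩

lemma mk_gmax (hn : 1 ≤ n) {x : ℤ} (hx : ¬ InfC n r x) :
    (mkTITO n hn r f).gmax hn x = G n r f x := by
  set t' := mkTITO n hn r f with ht'
  have h312 : t'.Avoids312 := mk_avoids hn
  have hsd : ¬ t'.SD x := by rw [mk_sd hn]; exact hx
  apply le_antisymm
  · rcases eq_or_lt_of_le (t'.gmax_ge hn x) with he | hlt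
    · rw [← he]; exact G_ge hn hx
    · have hrel : t'.rel (t'.gmax hn x) x := t'.gmax_rel hn x
      rcases hrel with h | h | h | h
      · omega
      · exact absurd h.2.1 hx
      · exact absurd h.2 hx
      · rcases h.2.2 with ⟨h1, h2⟩ | ⟨h1, h2⟩
        · omega
        · omega
  · rcases eq_or_lt_of_le (G_ge hn (f := f) hx) with he | hlt
    · rw [← he]; exact t'.gmax_ge hn x
    · have hGw := same_window hn (f := f) hx hlt (le_refl _)
      have hrel : t'.rel (G n r f x) x := by
        right; right; right
        exact ⟨hGw.1, hx, Or.inr ⟨hlt, le_refl _⟩⟩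
      exact (t'.rel_iff_le_gmax hn h312 hsd hlt).mp hrel

end TITOConstr2

namespace TITO

variable {n : ℕ} (t : TITO n)

lemma gmax_shift_nat (hn : 1 ≤ n) (h312 : t.Avoids312) {a : ℤ} (ha : ¬ t.SD a) (k : ℕ) :
    t.gmax hn (a + k * n) = t.gmax hn a + k * n := by
  induction k with
  | zero => simp
  | succ m ih =>
    have ham : ¬ t.SD (a + m * n) := fun h => ha ((t.sd_shift m).mpr h)
    have h1 : t.gmax hn (a + m * n + n) = t.gmax hn (a + m * n) + n :=
      t.gmax_shift hn h312 ham
    have h2 : a + ((m : ℕ) + 1 : ℕ) * (n : ℤ) = a + m * n + n := by push_cast; ring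
    rw [h2, h1, ih]
    push_cast
    ring

lemma gmax_shift_int (hn : 1 ≤ n) (h312 : t.Avoids312) {a : ℤ} (ha : ¬ t.SD a) (k : ℤ) :
    t.gmax hn (a + k * n) = t.gmax hn a + k * n := by
  rcases le_or_gt 0 k with hk | hk
  · lift k to ℕ using hk
    exact_mod_cast t.gmax_shift_nat hn h312 ha k
  · have hak : ¬ t.SD (a + k * n) := fun h => ha ((t.sd_shift k).mpr h)
    have hm : (((-k).toNat : ℕ) : ℤ) = -k := Int.toNat_of_nonneg (by omega)
    have h1 := t.gmax_shift_nat hn h312 hak (-k).toNat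
    have h2 : a + k * n + (((-k).toNat : ℕ) : ℤ) * n = a := by rw [hm]; ring
    rw [h2] at h1
    have h3 : (((-k).toNat : ℕ) : ℤ) * n = -(k * n) := by rw [hm]; ring
    omega

/-- Existence of a canonical residue for a non-real 312-avoiding TITO. -/
lemma exists_r (hn : 1 ≤ n) (h312 : t.Avoids312) (hnr : ¬ t.IsReal) :
    ∃ r : ℤ, (0 ≤ r ∧ r < n) ∧ ∀ x, (t.SD x ↔ TITOConstr.InfC n r x) := by
  have hex : ∃ r₀ : ℤ, ∀ x : ℤ, (t.SD x ↔ ∃ k : ℤ, x = r₀ + k * n) := by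
    have := (t.real_iff h312 hn).not.mp hnr
    rwa [not_not] at this
  obtain ⟨r₀, hr₀⟩ := hex
  have hN : (1:ℤ) ≤ (n:ℤ) := by exact_mod_cast hn
  refine ⟨r₀ % n, ⟨Int.emod_nonneg _ (by omega), Int.emod_lt_of_pos _ (by omega)⟩, fun x => ?_⟩
  rw [hr₀ x]
  have hid := Int.mul_ediv_add_emod r₀ (n : ℤ)
  constructor
  · rintro ⟨k, hk⟩
    refine ⟨r₀ / n + k, ?_⟩
    have e1 : (n:ℤ) * (r₀ / n + k) = (n:ℤ) * (r₀ / n) + k * n := by ring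
    omega
  · rintro ⟨c, hc⟩
    refine ⟨c - r₀ / n, ?_⟩
    have e1 : (c - r₀ / n) * (n:ℤ) = (n:ℤ) * c - (n:ℤ) * (r₀ / n) := by ring
    omega

lemma r_unique (hn : 1 ≤ n) {r r' : ℤ} (hr : 0 ≤ r ∧ r < n) (hr' : 0 ≤ r' ∧ r' < n)
    (h : ∀ x, (TITOConstr.InfC n r x ↔ TITOConstr.InfC n r' x)) : r = r' := by
  have h1 : TITOConstr.InfC n r' r := (h r).mp ⟨0, by ring⟩
  obtain ⟨c, hc⟩ := h1
  have hN : (1:ℤ) ≤ (n:ℤ) := by exact_mod_cast hn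
  rcases lt_trichotomy c 0 with h2 | h2 | h2
  · nlinarith
  · rw [h2, mul_zero] at hc; omega
  · nlinarith

end TITO

namespace TITOMain
open TITOConstr TITOConstr2

variable {n : ℕ}

noncomputable def fr (hn : 1 ≤ n) (t : TITO n) (h312 : t.Avoids312) (hnr : ¬ t.IsReal) : ℤ :=
  Classical.choose (t.exists_r hn h312 hnr)

lemma fr_spec (hn : 1 ≤ n) (t : TITO n) (h312 : t.Avoids312) (hnr : ¬ t.IsReal) :
    (0 ≤ fr hn t h312 hnr ∧ fr hn t h312 hnr < n) ∧
      ∀ x, (t.SD x ↔ InfC n (fr hn t h312 hnr) x) :=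
  Classical.choose_spec (t.exists_r hn h312 hnr)

lemma not_sd_of_hr (t : TITO n) {r : ℤ} (hr : ∀ x, (t.SD x ↔ InfC n r x)) {x : ℤ}
    (hx : ¬ InfC n r x) : ¬ t.SD x := fun h => hx ((hr x).mp h)

lemma window_bound (hn : 1 ≤ n) (t : TITO n) (h312 : t.Avoids312) {r : ℤ}
    (hr : ∀ x, (t.SD x ↔ InfC n r x)) {p : ℤ} (hp1 : r < p) (hp2 : p < r + n) :
    ¬ t.SD p ∧ t.gmax hn p ≤ r + n - 1 := by
  have hN : (1:ℤ) ≤ (n:ℤ) := by exact_mod_cast hn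
  have hpI : ¬ InfC n r p := by
    rintro ⟨c, hc⟩
    have h1 : (0:ℤ) < p - r := by omega
    have h2 := Int.le_of_dvd h1 ⟨c, hc⟩
    omega
  have hsd : ¬ t.SD p := not_sd_of_hr t hr hpI
  refine ⟨hsd, ?_⟩
  by_contra hc
  push_neg at hc
  have h1 : t.rel (r + n) p := (t.rel_iff_le_gmax hn h312 hsd (by omega)).mpr (by omega)
  have h2 : t.SD (r + n) := (hr (r + n)).mpr ⟨1, by ring⟩
  have h3 : t.rel p (r + n) := t.below_sd h312 hsd h2 hn
  have h4 : p = r + n := t.antisymm _ _ h3 h1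
  omega

noncomputable def fwdF (hn : 1 ≤ n) (t : TITO n) (h312 : t.Avoids312) (r : ℤ)
    (hr : ∀ x, (t.SD x ↔ InfC n r x)) : NF (n - 1) :=
  NF.mk' (fun i => ((t.gmax hn (r + 1 + i)) - (r + 1)).toNat)
    (by
      intro k hk
      have hcast : ((n - 1 : ℕ) : ℤ) = (n:ℤ) - 1 := by omega
      have hwb := window_bound hn t h312 hr (p := r + 1 + k) (by omega) (by
        have : (k:ℤ) < (n:ℤ) - 1 := by exact_mod_cast (by omega : (k:ℤ) < ((n-1 : ℕ) : ℤ))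
        omega)
      have hge := t.gmax_ge hn (r + 1 + k)
      constructor <;> omega)
    (by
      intro i k hik hkL hk
      have hwb := window_bound hn t h312 hr (p := r + 1 + i) (by omega) (by
        have : (i:ℤ) < (n:ℤ) - 1 := by omega
        omega)
      have hwbk := window_bound hn t h312 hr (p := r + 1 + k) (by omega) (by
        have : (k:ℤ) < (n:ℤ) - 1 := by omega
        omega)
      have hge := t.gmax_ge hn (r + 1 + i)
      have hgek := t.gmax_ge hn (r + 1 + k)
      have hnest := t.gmax_nest hn h312 hwb.1 (a := r + 1 + i) (b := r + 1 + k)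
        (by omega) (by omega)
      omega)

lemma fwdF_val (hn : 1 ≤ n) (t : TITO n) (h312 : t.Avoids312) (r : ℤ)
    (hr : ∀ x, (t.SD x ↔ InfC n r x)) {k : ℕ} (hk : k < n - 1) :
    (fwdF hn t h312 r hr).val k = ((t.gmax hn (r + 1 + k)) - (r + 1)).toNat := by
  unfold fwdF
  rw [NF.mk'_val _ _ _ hk]

lemma ex_small {r e : ℤ} (hn : 1 ≤ n) (h1 : 0 ≤ e) (h2 : e < (n:ℤ)) :
    ex n r (r + 1 + e) = e := by
  unfold ex
  have h3 : r + 1 + e - r - 1 = e := by ring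
  rw [h3, Int.emod_eq_of_lt h1 h2]

lemma fwdF_G (hn : 1 ≤ n) (t : TITO n) (h312 : t.Avoids312) (r : ℤ)
    (hr : ∀ x, (t.SD x ↔ InfC n r x)) {x : ℤ} (hx : ¬ InfC n r x) :
    G n r (fwdF hn t h312 r hr) x = t.gmax hn x := by
  have hN : (1:ℤ) ≤ (n:ℤ) := by exact_mod_cast hn
  obtain ⟨q, hq⟩ := ex_decomp (n := n) (r := r) x
  have her := ex_range hn (n := n) (r := r) x
  have hei := ex_notInf hn (r := r) hx
  set e := ex n r x with he
  have htn : ((e.toNat : ℕ) : ℤ) = e := Int.toNat_of_nonneg her.1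
  have hwb := window_bound hn t h312 hr (p := r + 1 + e) (by omega) (by omega)
  have hge := t.gmax_ge hn (r + 1 + e)
  have h1 : fz n (fwdF hn t h312 r hr) e = t.gmax hn (r + 1 + e) - (r + 1) := by
    unfold fz
    rw [fwdF_val hn t h312 r hr (by omega : e.toNat < n - 1)]
    rw [show ((e.toNat : ℕ) : ℤ) = e from htn]
    omega
  have h2 := t.gmax_shift_int hn h312 hwb.1 q
  have hxe : x = r + 1 + e + q * (n:ℤ) := by omega
  have h3 : G n r (fwdF hn t h312 r hr) x = x - e + fz n (fwdF hn t h312 r hr) e := rfl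
  rw [h3, h1]
  rw [hxe] at *
  omega

lemma mk_eq_self (hn : 1 ≤ n) (t : TITO n) (h312 : t.Avoids312) (r : ℤ)
    (hr : ∀ x, (t.SD x ↔ InfC n r x)) (f : NF (n - 1))
    (hf : ∀ x : ℤ, ¬ InfC n r x → G n r f x = t.gmax hn x) :
    mkTITO n hn r f = t := by
  apply TITO.ext'
  funext x y
  apply propext
  show mkRel n r f x y ↔ t.rel x y
  by_cases hxy : x = y
  · subst hxy
    simp [mkRel, t.refl]
  by_cases hx : InfC n r x <;> by_cases hy : InfC n r y
  · -- both InfC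
    constructor
    · intro h
      rcases h with h | h | h | h
      · exact absurd h hxy
      · rcases eq_or_lt_of_le h.2.2 with he | hlt
        · exact absurd he.symm hxy
        · exact t.dominate h312 ((hr y).mpr hy) hlt hn
      · exact absurd hx h.1
      · exact absurd hx h.1
    · intro h
      right; left
      refine ⟨hx, hy, ?_⟩
      by_contra hc
      push_neg at hc
      have h2 : t.rel y x := t.dominate h312 ((hr x).mpr hx) hc hn
      exact hxy (t.antisymm _ _ h h2)
  · -- InfC x, ¬ InfC y : both false
    constructor
    · intro h
      rcases h with h | h | h | h
      · exact absurd h hxy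
      · exact absurd h.2.1 hy
      · exact absurd hx h.1
      · exact absurd hx h.1.elim
    · intro h
      exfalso
      have h2 : t.rel y x := t.below_sd h312 (not_sd_of_hr t hr hy) ((hr x).mpr hx) hn
      exact hxy (t.antisymm _ _ h h2)
  · -- ¬ InfC x, InfC y : both true
    constructor
    · intro _
      exact t.below_sd h312 (not_sd_of_hr t hr hx) ((hr y).mpr hy) hn
    · intro _
      right; right; left; exact ⟨hx, hy⟩
  · -- neither
    have hsx : ¬ t.SD x := not_sd_of_hr t hr hx
    have hsy : ¬ t.SD y := not_sd_of_hr t hr hy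
    rcases lt_trichotomy x y with h | h | h
    · rw [t.rel_iff_not hxy, t.rel_iff_le_gmax hn h312 hsx h]
      constructor
      · intro hm
        rcases hm with hm | hm | hm | hm
        · exact absurd hm hxy
        · exact absurd hm.1 hx
        · exact absurd hm.2 hy
        · rcases hm.2.2 with ⟨h1, h2⟩ | ⟨h1, h2⟩
          · rw [hf x hx] at h2; omega
          · omega
      · intro hm
        right; right; right
        refine ⟨hx, hy, Or.inl ⟨h, ?_⟩⟩
        rw [hf x hx]
        omega
    · exact absurd h hxy
    · rw [show t.rel x y ↔ x ≤ t.gmax hn y from t.rel_iff_le_gmax hn h312 hsy h]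
      constructor
      · intro hm
        rcases hm with hm | hm | hm | hm
        · exact absurd hm hxy
        · exact absurd hm.1 hx
        · exact absurd hm.2 hy
        · rcases hm.2.2 with ⟨h1, h2⟩ | ⟨h1, h2⟩
          · omega
          · rw [hf y hy] at h2; omega
      · intro hm
        right; right; right
        refine ⟨hx, hy, Or.inr ⟨h, ?_⟩⟩
        rw [hf y hy]
        omega

end TITOMain

namespace TITOMain

lemma not_infC_window {n : ℕ} {r p : ℤ} (h1 : r < p) (h2 : p < r + n) :
    ¬ TITOConstr.InfC n r p := by
  rintro ⟨c, hc⟩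
  have hd : (0:ℤ) < p - r := by omega
  have := Int.le_of_dvd hd ⟨c, hc⟩
  omega

open TITOConstr TITOConstr2 in
noncomputable def mainEquiv (n : ℕ) (hn : 1 ≤ n) :
    (Fin n × NF (n - 1)) ≃ {t : TITO n // t.Avoids312 ∧ ¬ t.IsReal} where
  toFun rf := ⟨mkTITO n hn (rf.1 : ℤ) rf.2, mk_avoids hn, mk_notreal hn⟩
  invFun tt :=
    (⟨(fr hn tt.1 tt.2.1 tt.2.2).toNat, by
        have h := (fr_spec hn tt.1 tt.2.1 tt.2.2).1
        omega⟩,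
     fwdF hn tt.1 tt.2.1 (fr hn tt.1 tt.2.1 tt.2.2) (fr_spec hn tt.1 tt.2.1 tt.2.2).2)
  left_inv rf := by
    obtain ⟨r, f⟩ := rf
    set t' := mkTITO n hn (r : ℤ) f with ht'
    have h312 : t'.Avoids312 := mk_avoids hn
    have hnr : ¬ t'.IsReal := mk_notreal hn
    have hspec := fr_spec hn t' h312 hnr
    have hrr : fr hn t' h312 hnr = (r : ℤ) := by
      apply TITO.r_unique hn hspec.1
        ⟨by exact_mod_cast Nat.zero_le r.1, by exact_mod_cast r.2⟩
      intro x
      exact (hspec.2 x).symm.trans (mk_sd hn x)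
    have hb := hspec.1
    ext : 1
    · apply Fin.ext
      show ((fr hn t' h312 hnr).toNat : ℕ) = (r : ℕ)
      rw [hrr]
      omega
    · show fwdF hn t' h312 (fr hn t' h312 hnr) hspec.2 = f
      apply NF.ext'
      intro k hk
      rw [fwdF_val hn t' h312 _ hspec.2 hk]
      rw [hrr]
      have hkb : (0:ℤ) ≤ (k:ℤ) ∧ (k:ℤ) < (n:ℤ) - 1 := by
        constructor
        · exact_mod_cast Nat.zero_le k
        · omega
      have hnic : ¬ InfC n (r:ℤ) ((r:ℤ) + 1 + (k:ℤ)) :=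
        not_infC_window (by omega) (by omega)
      rw [ht', mk_gmax hn hnic]
      have hes : ex n (r:ℤ) ((r:ℤ) + 1 + (k:ℤ)) = (k:ℤ) := ex_small hn (by omega) (by omega)
      have hG : G n (r:ℤ) f ((r:ℤ) + 1 + (k:ℤ)) =
          (r:ℤ) + 1 + (k:ℤ) - (k:ℤ) + fz n f (k:ℤ) := by
        unfold G
        rw [hes]
      have hfz : fz n f (k:ℤ) = (f.val k : ℤ) := by
        unfold fz
        rw [Int.toNat_natCast]
      rw [hG, hfz]
      omega
  right_inv tt := by
    obtain ⟨t, ht⟩ := tt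
    apply Subtype.ext
    have hspec := fr_spec hn t ht.1 ht.2
    have hcast : (((fr hn t ht.1 ht.2).toNat : ℕ) : ℤ) = fr hn t ht.1 ht.2 := by
      have := hspec.1
      omega
    show mkTITO n hn _ _ = t
    simp only [Fin.val_mk]
    rw [hcast]
    exact mk_eq_self hn t ht.1 _ hspec.2 _ (fun x hx => fwdF_G hn t ht.1 _ hspec.2 hx)

end TITOMain

theorem stmt16 (n : ℕ) (hn : 2 ≤ n) :
    Nat.card {t : TITO n // t.Avoids312} =
      Nat.card {t : TITO n // t.Avoids312 ∧ t.IsReal} + n * catalan (n - 1) := by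
  classical
  have hn1 : 1 ≤ n := by omega
  haveI hfin : Finite {t : TITO n // t.Avoids312} := TITO.finite_avoids hn1
  have e1 : ({a : {t : TITO n // t.Avoids312} // a.1.IsReal} ⊕
      {a : {t : TITO n // t.Avoids312} // ¬ a.1.IsReal}) ≃ {t : TITO n // t.Avoids312} :=
    Equiv.sumCompl _
  have e2 : {a : {t : TITO n // t.Avoids312} // a.1.IsReal} ≃
      {t : TITO n // t.Avoids312 ∧ t.IsReal} :=
    Equiv.subtypeSubtypeEquivSubtypeInter (fun t : TITO n => t.Avoids312)
      (fun t => t.IsReal)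
  have e3 : {a : {t : TITO n // t.Avoids312} // ¬ a.1.IsReal} ≃
      {t : TITO n // t.Avoids312 ∧ ¬ t.IsReal} :=
    Equiv.subtypeSubtypeEquivSubtypeInter (fun t : TITO n => t.Avoids312)
      (fun t => ¬ t.IsReal)
  have hcard1 : Nat.card {t : TITO n // t.Avoids312} =
      Nat.card {t : TITO n // t.Avoids312 ∧ t.IsReal} +
        Nat.card {t : TITO n // t.Avoids312 ∧ ¬ t.IsReal} := by
    rw [← Nat.card_congr e1, Nat.card_sum, Nat.card_congr e2, Nat.card_congr e3]
  have hcard2 : Nat.card {t : TITO n // t.Avoids312 ∧ ¬ t.IsReal} = n * catalan (n - 1) := by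
    rw [← Nat.card_congr (TITOMain.mainEquiv n hn1), Nat.card_prod, NF.card]
    congr 1
    simp [Nat.card_eq_fintype_card]
  rw [hcard1, hcard2]
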